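/- Let G be a finite solvable group with exactly n distinct prime divisors of its order. If |G| is square-free, then the number of conjugacy classes of subgroups of G equals 2^n, one for each divisor of |G|. -/

import Mathlib

open Pointwise

section AuxHallSquarefree

open Subgroup
open scoped IsMulCommutative


variable {G : Type*} [Group G]

lemma card_map_conj (g : G) (H : Subgroup G) :
    Nat.card (H.map (MulAut.conj g).toMonoidHom) = Nat.card H :=
  Nat.card_congr (H.equivMapOfInjective _ (MulAut.conj g).injective).toEquiv.symm

lemma map_conj_mul (g₁ g₂ : G) (H : Subgroup G) :
    (H.map (MulAut.conj g₂).toMonoidHom).map (MulAut.conj g₁).toMonoidHom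
      = H.map (MulAut.conj (g₁ * g₂)).toMonoidHom := by
  rw [Subgroup.map_map]
  congr 1
  ext x
  simp [MulAut.conj_apply, mul_assoc]

/-- Uniqueness of subgroups of prime order `q` when one of them is normal,
in a group of squarefree order. -/
lemma eq_of_card_eq_prime [Finite G] (hsq : Squarefree (Nat.card G)) {q : ℕ} (hq : q.Prime)
    (N H : Subgroup G) [hNn : N.Normal] (hN : Nat.card N = q) (hH : Nat.card H = q) : H = N := by
  have hdvd : Nat.card ((N ⊓ H : Subgroup G)) ∣ q := hH ▸ card_dvd_of_le inf_le_right
  rcases (Nat.Prime.eq_one_or_self_of_dvd hq _ hdvd) with h1 | hqq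
  · -- intersection trivial: contradiction with squarefree
    exfalso
    have hbot : N ⊓ H = ⊥ := card_eq_one.mp h1
    set f := (QuotientGroup.mk' N).comp H.subtype with hf
    have hinj : Function.Injective f := by
      rw [injective_iff_map_eq_one]
      intro a ha
      have haN : (a : G) ∈ N := (QuotientGroup.eq_one_iff _).mp ha
      have : (a : G) ∈ N ⊓ H := ⟨haN, a.2⟩
      rw [hbot] at this
      exact Subtype.ext this
    have h1 : Nat.card H ∣ Nat.card (G ⧸ N) := by
      have e : Nat.card H = Nat.card f.range := Nat.card_congr (MonoidHom.ofInjective hinj).toEquiv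
      exact e ▸ Subgroup.card_subgroup_dvd_card f.range
    have h2 : q * q ∣ Nat.card G := by
      rw [Subgroup.card_eq_card_quotient_mul_card_subgroup N, hN]
      exact mul_dvd_mul (hH ▸ h1) dvd_rfl
    exact hq.not_isUnit (hsq q h2)
  · -- intersection is everything
    have h1 : N ⊓ H = H := eq_of_le_of_card_ge inf_le_right (by rw [hH, hqq])
    have h2 : H ≤ N := h1 ▸ inf_le_left
    exact eq_of_le_of_card_ge h2 (by rw [hH, hN])

/-- In a squarefree group a normal subgroup of prime order `q` is contained in every
subgroup of order divisible by `q`. -/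
lemma normal_prime_le [Finite G] (hsq : Squarefree (Nat.card G)) {q : ℕ} (hq : q.Prime)
    (N H : Subgroup G) [hNn : N.Normal] (hN : Nat.card N = q) (hqH : q ∣ Nat.card H) :
    N ≤ H := by
  haveI : Fintype H := Fintype.ofFinite _
  haveI : Fact q.Prime := ⟨hq⟩
  obtain ⟨x, hx⟩ := exists_prime_orderOf_dvd_card (G := H) q
    (by rwa [← Nat.card_eq_fintype_card])
  have hcard : Nat.card (Subgroup.zpowers (x : G)) = q := by
    rw [Nat.card_zpowers, Subgroup.orderOf_coe, hx]
  have := eq_of_card_eq_prime hsq hq N (Subgroup.zpowers (x : G)) hN hcard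
  rw [← this]
  exact Subgroup.zpowers_le.mpr x.2

lemma card_map_inj {G₂ : Type*} [Group G₂] (f : G →* G₂) (hf : Function.Injective f)
    (K : Subgroup G) : Nat.card (K.map f) = Nat.card K :=
  Nat.card_congr (K.equivMapOfInjective f hf).toEquiv.symm

lemma prime_isCommutative {q : ℕ} (hq : q.Prime) {H : Subgroup G} (hH : Nat.card H = q) :
    IsMulCommutative H := by
  haveI : Fact q.Prime := ⟨hq⟩
  haveI : IsCyclic H := isCyclic_of_prime_card hH
  letI : CommGroup H := IsCyclic.commGroup
  exact ⟨⟨fun a b => mul_comm a b⟩⟩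

/-- A nontrivial finite solvable group of squarefree order has a normal subgroup
of prime order. -/
lemma exists_normal_prime [Finite G] (hsolv : IsSolvable G) (hsq : Squarefree (Nat.card G))
    (hnt : Nat.card G ≠ 1) :
    ∃ (N : Subgroup G) (q : ℕ), q.Prime ∧ N.Normal ∧ Nat.card N = q := by
  classical
  have hpos : 0 < Nat.card G := Nat.card_pos
  haveI : Nontrivial G := (Finite.one_lt_card_iff_nontrivial).mp (by omega)
  obtain ⟨hex⟩ := hsolv
  have hex' : ∃ n, derivedSeries G n = ⊥ := hex
  set n := Nat.find hex' with hn
  have hbot : derivedSeries G n = ⊥ := Nat.find_spec hex'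
  have hn0 : n ≠ 0 := by
    intro h
    rw [h, derivedSeries_zero] at hbot
    simp at hbot
  set A := derivedSeries G (n - 1) with hA
  have hAne : A ≠ ⊥ := Nat.find_min hex' (by omega)
  haveI hAnorm : A.Normal := derivedSeries_normal G (n - 1)
  have hcomm : ∀ x ∈ A, ∀ y ∈ A, x * y = y * x := by
    have hAb : ⁅A, A⁆ = ⊥ := by
      have : derivedSeries G (n - 1 + 1) = ⊥ := by
        rwa [show n - 1 + 1 = n by omega]
      rwa [derivedSeries_succ] at this
    have hle := Subgroup.commutator_eq_bot_iff_le_centralizer.mp hAb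
    intro x hx y hy
    exact (Subgroup.mem_centralizer_iff.mp (hle hx) y hy).symm
  -- a prime dividing |A|
  have hA1 : Nat.card A ≠ 1 := fun h => hAne (Subgroup.card_eq_one.mp h)
  set q := (Nat.card A).minFac with hq
  have hqprime : q.Prime := Nat.minFac_prime hA1
  haveI : Fact q.Prime := ⟨hqprime⟩
  haveI : Fintype A := Fintype.ofFinite _
  obtain ⟨x, hx⟩ := exists_prime_orderOf_dvd_card (G := A) q
    (by rw [← Nat.card_eq_fintype_card]; exact Nat.minFac_dvd _)
  set N := Subgroup.zpowers (x : G) with hN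
  have hNcard : Nat.card N = q := by rw [hN, Nat.card_zpowers, Subgroup.orderOf_coe, hx]
  have hNA : N ≤ A := Subgroup.zpowers_le.mpr x.2
  -- uniqueness of subgroups of order q inside A
  have hsqA : Squarefree (Nat.card A) :=
    hsq.squarefree_of_dvd (Subgroup.card_subgroup_dvd_card A)
  have huniq : ∀ P : Subgroup G, P ≤ A → Nat.card P = q → P = N := by
    intro P hPA hPcard
    have h1 : Nat.card (N.subgroupOf A) = q := by
      rw [Nat.card_congr (Subgroup.subgroupOfEquivOfLe hNA).toEquiv]; exact hNcard
    have h2 : Nat.card (P.subgroupOf A) = q := by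
      rw [Nat.card_congr (Subgroup.subgroupOfEquivOfLe hPA).toEquiv]; exact hPcard
    haveI : (N.subgroupOf A).Normal := by
      constructor
      intro m hm g
      have : g * m * g⁻¹ = m := by
        have := hcomm (g : G) g.2 (m : G) m.2
        ext
        push_cast
        rw [this]
        group
      rwa [this]
    have := eq_of_card_eq_prime hsqA hqprime (N.subgroupOf A) (P.subgroupOf A) h1 h2
    have hmap := congrArg (Subgroup.map A.subtype) this
    rwa [Subgroup.subgroupOf_map_subtype, Subgroup.subgroupOf_map_subtype,
      inf_of_le_left hPA, inf_of_le_left hNA] at hmap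
  refine ⟨N, q, hqprime, ?_, hNcard⟩
  constructor
  intro y hy g
  have hmem : g * y * g⁻¹ ∈ N.map (MulAut.conj g).toMonoidHom :=
    ⟨y, hy, by simp [MulAut.conj_apply]⟩
  have hNA' : N.map (MulAut.conj g).toMonoidHom ≤ A := by
    rintro _ ⟨z, hz, rfl⟩
    exact hAnorm.conj_mem z (hNA hz) g
  rwa [huniq _ hNA' (by rw [card_map_inj _ (MulAut.conj g).injective, hNcard])] at hmem

/-- Complements of an abelian normal subgroup of coprime order are conjugate. -/
lemma conj_of_isComplement' [Finite G] {N H1 H2 : Subgroup G} [N.Normal]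
    [IsMulCommutative N] (h1 : IsComplement' N H1) (h2 : IsComplement' N H2)
    (hco : (Nat.card N).Coprime (Nat.card H1)) :
    ∃ g : G, H1.map (MulAut.conj g).toMonoidHom = H2 := by
  classical
  haveI : Fintype H1 := Fintype.ofFinite _
  -- the two projections coming from the decomposition G = N * H2
  set nn : H1 → N := fun h => (h2.equiv (h : G)).1 with hnn
  set pp : H1 → H2 := fun h => (h2.equiv (h : G)).2 with hpp
  have hdec : ∀ h : H1, (h : G) = (nn h : G) * (pp h : G) := fun h =>
    (h2.equiv_fst_mul_equiv_snd (h : G)).symm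
  have huniq : ∀ (a b : G) (ha : a ∈ N) (hb : b ∈ H2),
      h2.equiv (a * b) = (⟨a, ha⟩, ⟨b, hb⟩) := by
    intro a b ha hb
    obtain ⟨x, -, hu⟩ := h2.existsUnique (a * b)
    set x₀ : ↥(N : Set G) × ↥(H2 : Set G) := (⟨a, ha⟩, ⟨b, hb⟩) with hx₀
    have e1 : x₀ = x := hu x₀ rfl
    have e2 : h2.equiv (a * b) = x := hu _ (h2.equiv_fst_mul_equiv_snd (a * b))
    rw [e2, ← e1]
  -- the crossed homomorphism identity
  have key : ∀ h h' : H1,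
      nn (h * h') = nn h * MulAut.conjNormal ((pp h : G)) (nn h') ∧
      pp (h * h') = pp h * pp h' := by
    intro h h'
    have haN : ((nn h : G) * ((pp h : G) * (nn h' : G) * (pp h : G)⁻¹)) ∈ N :=
      mul_mem (nn h).2 (‹N.Normal›.conj_mem _ (nn h').2 _)
    have hbH : ((pp h : G) * (pp h' : G)) ∈ H2 := mul_mem (pp h).2 (pp h').2
    have hmul : ((h * h' : H1) : G) =
        ((nn h : G) * ((pp h : G) * (nn h' : G) * (pp h : G)⁻¹)) *
          ((pp h : G) * (pp h' : G)) := by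
      push_cast
      rw [hdec h, hdec h']
      group
    have := huniq _ _ haN hbH
    rw [← hmul] at this
    constructor
    · have := congrArg Prod.fst this
      simp only [hnn] at this ⊢
      refine Subtype.ext ?_
      rw [this]
      simp [MulAut.conjNormal_apply, mul_assoc]
    · have := congrArg Prod.snd this
      simp only [hpp] at this ⊢
      exact Subtype.ext (by rw [this]; rfl)
  -- averaging
  set d : ℕ := Nat.card H1 with hd
  have hco' : (Nat.card N).Coprime d := hco
  set Sn : N := ∏ h : H1, nn h with hSn
  have hSn_eq : ∀ h : H1, Sn = nn h ^ d * MulAut.conjNormal ((pp h : G)) Sn := by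
    intro h
    have e1 : ∏ h' : H1, nn (h * h') = Sn := by
      rw [hSn]
      exact Equiv.prod_comp (Equiv.mulLeft h) nn
    calc Sn = ∏ h' : H1, nn (h * h') := e1.symm
      _ = ∏ h' : H1, (nn h * MulAut.conjNormal ((pp h : G)) (nn h')) := by
          refine Finset.prod_congr rfl fun h' _ => (key h h').1
      _ = (∏ _h' : H1, nn h) * ∏ h' : H1, MulAut.conjNormal ((pp h : G)) (nn h') := by
          rw [Finset.prod_mul_distrib]
      _ = nn h ^ d * MulAut.conjNormal ((pp h : G)) Sn := by
          rw [Finset.prod_const, Finset.card_univ, map_prod, hd, Nat.card_eq_fintype_card]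
  set e : N := (powCoprime hco').symm Sn with he
  have hed : e ^ d = Sn := by
    have := (powCoprime hco').apply_symm_apply Sn
    rwa [powCoprime_apply] at this
  have hnn_eq : ∀ h : H1, nn h = e * (MulAut.conjNormal ((pp h : G)) e)⁻¹ := by
    intro h
    set φ := MulAut.conjNormal (H := N) ((pp h : G)) with hφ
    have hpow : nn h ^ d = (e * (φ e)⁻¹) ^ d := by
      have hmp : (φ e) ^ d = φ (e ^ d) := (map_pow φ e d).symm
      rw [mul_pow, inv_pow, hmp, hed, eq_mul_inv_iff_mul_eq]
      exact (hSn_eq h).symm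
    exact (powCoprime hco').injective (by rw [powCoprime_apply, powCoprime_apply, hpow])
  -- conclude: conjugation by e⁻¹ maps H1 into H2
  have hconj : ∀ h : H1, ((e : G))⁻¹ * (h : G) * (e : G) = ((pp h : G)) := by
    intro h
    have : (h : G) = (e : G) * (pp h : G) * (e : G)⁻¹ := by
      rw [hdec h, hnn_eq h]
      have : ((MulAut.conjNormal ((pp h : G)) e : N) : G) = (pp h : G) * e * (pp h : G)⁻¹ :=
        MulAut.conjNormal_apply _ _
      push_cast
      rw [this]
      group
    rw [this]
    group
  refine ⟨((e : G))⁻¹, ?_⟩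
  have hle : H1.map (MulAut.conj ((e : G))⁻¹).toMonoidHom ≤ H2 := by
    rintro x ⟨h, hh, rfl⟩
    have : (MulAut.conj ((e : G))⁻¹) h = ((e : G))⁻¹ * h * (e : G) := by
      simp [MulAut.conj_apply]
    rw [MulEquiv.coe_toMonoidHom, this]
    have := hconj ⟨h, hh⟩
    simp only [Subgroup.coe_mk] at this
    rw [this]
    exact (pp ⟨h, hh⟩).2
  have hcard : Nat.card H2 ≤ Nat.card (H1.map (MulAut.conj ((e : G))⁻¹).toMonoidHom) := by
    have e1 : Nat.card (H1.map (MulAut.conj ((e : G))⁻¹).toMonoidHom) = Nat.card H1 :=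
      Nat.card_congr (H1.equivMapOfInjective _ (MulAut.conj _).injective).toEquiv.symm
    have e2 : Nat.card H1 = Nat.card H2 :=
      Nat.eq_of_mul_eq_mul_left Nat.card_pos (h1.card_mul.trans h2.card_mul.symm)
    omega
  exact eq_of_le_of_card_ge hle hcard

section Quot
variable [Finite G] (N : Subgroup G) [N.Normal]

lemma card_comap_mk' (Hb : Subgroup (G ⧸ N)) :
    Nat.card (Hb.comap (QuotientGroup.mk' N)) = Nat.card Hb * Nat.card N := by
  have h1 : (Hb.comap (QuotientGroup.mk' N)).index = Hb.index :=
    Subgroup.index_comap_of_surjective _ (QuotientGroup.mk'_surjective N)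
  have h2 := Subgroup.card_mul_index (Hb.comap (QuotientGroup.mk' N))
  have h3 := Subgroup.card_mul_index Hb
  have h4 := Subgroup.card_eq_card_quotient_mul_card_subgroup N
  have h5 : Hb.index ≠ 0 := Subgroup.index_ne_zero_of_finite
  rw [h1] at h2
  refine Nat.eq_of_mul_eq_mul_right (Nat.pos_of_ne_zero h5) ?_
  calc Nat.card (Hb.comap (QuotientGroup.mk' N)) * Hb.index = Nat.card G := h2
    _ = Nat.card (G ⧸ N) * Nat.card N := h4
    _ = (Nat.card Hb * Hb.index) * Nat.card N := by rw [h3]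
    _ = Nat.card Hb * Nat.card N * Hb.index := by ring

lemma le_comap_mk' (Hb : Subgroup (G ⧸ N)) : N ≤ Hb.comap (QuotientGroup.mk' N) := by
  intro x hx
  have h1 : (QuotientGroup.mk' N) x = 1 := (QuotientGroup.eq_one_iff x).mpr hx
  rw [Subgroup.mem_comap, h1]
  exact one_mem _

lemma card_map_mk'_of_disjoint {H : Subgroup G} (h : N ⊓ H = ⊥) :
    Nat.card (H.map (QuotientGroup.mk' N)) = Nat.card H := by
  have hrange : ((QuotientGroup.mk' N).comp H.subtype).range = H.map (QuotientGroup.mk' N) := by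
    rw [MonoidHom.range_comp, Subgroup.range_subtype]
  have hinj : Function.Injective ((QuotientGroup.mk' N).comp H.subtype) := by
    rw [injective_iff_map_eq_one]
    intro a ha
    have haN : (a : G) ∈ N := (QuotientGroup.eq_one_iff _).mp ha
    have : (a : G) ∈ N ⊓ H := ⟨haN, a.2⟩
    rw [h] at this
    exact Subtype.ext this
  rw [← hrange]
  exact (Nat.card_congr (MonoidHom.ofInjective hinj).toEquiv).symm

lemma card_map_mk'_of_le {H : Subgroup G} (h : N ≤ H) :
    Nat.card (H.map (QuotientGroup.mk' N)) * Nat.card N = Nat.card H := by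
  have := card_comap_mk' N (H.map (QuotientGroup.mk' N))
  rw [Subgroup.comap_map_eq, QuotientGroup.ker_mk', sup_eq_left.mpr h] at this
  exact this.symm

lemma map_mk'_conj (g : G) (H : Subgroup G) :
    (H.map (MulAut.conj g).toMonoidHom).map (QuotientGroup.mk' N) =
      (H.map (QuotientGroup.mk' N)).map
        (MulAut.conj (QuotientGroup.mk' N g)).toMonoidHom := by
  rw [Subgroup.map_map, Subgroup.map_map]
  have : (QuotientGroup.mk' N).comp (MulAut.conj g).toMonoidHom =
      ((MulAut.conj (QuotientGroup.mk' N g)).toMonoidHom).comp (QuotientGroup.mk' N) := by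
    ext x; simp [MulAut.conj_apply]
  rw [this]

end Quot

lemma map_subtype_conj (K : Subgroup G) (k : K) (X : Subgroup K) :
    (X.map (MulAut.conj k).toMonoidHom).map K.subtype =
      (X.map K.subtype).map (MulAut.conj (k : G)).toMonoidHom := by
  rw [Subgroup.map_map, Subgroup.map_map]
  have : K.subtype.comp (MulAut.conj k).toMonoidHom =
      ((MulAut.conj (k : G)).toMonoidHom).comp K.subtype := by
    ext x; simp [MulAut.conj_apply]
  rw [this]

universe u

lemma hall_sf : ∀ (m : ℕ) (G : Type u) [Group G] [Finite G], IsSolvable G →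
    Squarefree (Nat.card G) → Nat.card G = m →
    ((∀ d, d ∣ m → ∃ H : Subgroup G, Nat.card H = d) ∧
     (∀ H K : Subgroup G, Nat.card H = Nat.card K →
       ∃ g : G, H.map (MulAut.conj g).toMonoidHom = K)) := by
  intro m
  induction m using Nat.strong_induction_on with
  | _ m ih =>
  intro G _ _ hsolv hsq hm
  rcases eq_or_ne m 1 with rfl | hm1
  · haveI : Subsingleton G := Nat.card_eq_one_iff_unique.mp hm |>.1
    have hbot : ∀ L : Subgroup G, L = ⊥ := by
      intro L; ext x
      simp [Subsingleton.elim x (1 : G), one_mem]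
    constructor
    · intro d hd
      rw [Nat.dvd_one] at hd
      subst hd
      exact ⟨⊥, Subgroup.card_bot⟩
    · intro H K _
      refine ⟨1, ?_⟩
      rw [hbot (H.map (MulAut.conj 1).toMonoidHom), hbot K]
  · -- nontrivial case
    obtain ⟨N, q, hq, hNnorm, hNcard⟩ := exists_normal_prime hsolv hsq (hm ▸ hm1)
    haveI := hNnorm
    haveI : IsSolvable G := hsolv
    have hcardQ : Nat.card (G ⧸ N) * q = m := by
      rw [← hNcard, ← hm]
      exact (Subgroup.card_eq_card_quotient_mul_card_subgroup N).symm
    set l := Nat.card (G ⧸ N) with hl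
    have hq1 : 1 < q := hq.one_lt
    have hlpos : 0 < l := Nat.card_pos
    have hlm : l < m := by
      rw [← hcardQ]
      exact Nat.lt_mul_iff_one_lt_right hlpos |>.mpr hq1
    have hlq : m = l * q := hcardQ.symm
    have hsqQ : Squarefree l := hsq.squarefree_of_dvd (by rw [hm]; exact ⟨q, hlq⟩)
    obtain ⟨ihEx, ihConj⟩ := ih l hlm (G ⧸ N) (haveI : Group.IsSolvable G := hsolv; Group.isSolvable_of_surjective (QuotientGroup.mk'_surjective N)) hsqQ rfl
    have hq0 : q ≠ 0 := hq.pos.ne'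
    constructor
    · -- existence of a subgroup of each order d ∣ m
      intro d hd
      by_cases hqd : q ∣ d
      · obtain ⟨e, rfl⟩ := hqd
        have held : e ∣ l := by
          have : q * e ∣ q * l := by rwa [hlq, mul_comm l q] at hd
          exact (mul_dvd_mul_iff_left hq0).mp this
        obtain ⟨Hb, hHb⟩ := ihEx e held
        refine ⟨Hb.comap (QuotientGroup.mk' N), ?_⟩
        rw [card_comap_mk', hHb, hNcard, mul_comm]
      · have hcop : Nat.Coprime q d := (hq.coprime_iff_not_dvd).mpr hqd
        have hdl : d ∣ l := by
          have hd' : d ∣ l * q := by rwa [← hlq]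
          exact (Nat.Coprime.dvd_of_dvd_mul_right hcop.symm) hd'
        obtain ⟨Hb, hHb⟩ := ihEx d hdl
        set K := Hb.comap (QuotientGroup.mk' N) with hK
        have hKcard : Nat.card K = d * q := by rw [hK, card_comap_mk', hHb, hNcard]
        have hNK : N ≤ K := le_comap_mk' N Hb
        set Nk := N.subgroupOf K with hNk
        haveI : Nk.Normal := hNnorm.subgroupOf K
        have hNkcard : Nat.card Nk = q := by
          rw [hNk, Nat.card_congr (Subgroup.subgroupOfEquivOfLe hNK).toEquiv, hNcard]
        have hNkindex : Nk.index = d := by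
          have h1 := Subgroup.card_mul_index Nk
          rw [hNkcard, hKcard, mul_comm d q] at h1
          exact Nat.eq_of_mul_eq_mul_left hq.pos h1
        obtain ⟨C, hC⟩ := Subgroup.exists_right_complement'_of_coprime
          (N := Nk) (by rw [hNkcard, hNkindex]; exact hcop)
        have hCcard : Nat.card C = d := by
          have h1 := hC.card_mul
          rw [hNkcard, hKcard, mul_comm d q] at h1
          exact Nat.eq_of_mul_eq_mul_left hq.pos h1
        exact ⟨C.map K.subtype, by rw [card_map_inj _ K.subtype_injective, hCcard]⟩
    · -- conjugacy
      intro H K hHK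
      set d := Nat.card K with hd
      by_cases hqd : q ∣ d
      · have hNH : N ≤ H := normal_prime_le hsq hq N H hNcard (by rw [hHK]; exact hqd)
        have hNK : N ≤ K := normal_prime_le hsq hq N K hNcard hqd
        have hcards : Nat.card (H.map (QuotientGroup.mk' N)) =
            Nat.card (K.map (QuotientGroup.mk' N)) := by
          have h1 := card_map_mk'_of_le N hNH
          have h2 := card_map_mk'_of_le N hNK
          rw [hHK, hd, ← h2] at h1
          exact Nat.eq_of_mul_eq_mul_right (hNcard ▸ hq.pos) h1
        obtain ⟨gb, hgb⟩ := ihConj _ _ hcards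
        obtain ⟨g, rfl⟩ := QuotientGroup.mk'_surjective N gb
        refine ⟨g, ?_⟩
        have h1 : (H.map (MulAut.conj g).toMonoidHom).map (QuotientGroup.mk' N) =
            K.map (QuotientGroup.mk' N) := by rw [map_mk'_conj, hgb]
        have hNH' : N ≤ H.map (MulAut.conj g).toMonoidHom := by
          intro x hx
          refine ⟨g⁻¹ * x * g, hNH (by simpa using hNnorm.conj_mem x hx g⁻¹), ?_⟩
          simp [MulAut.conj_apply, mul_assoc]
        have := congrArg (Subgroup.comap (QuotientGroup.mk' N)) h1
        rwa [Subgroup.comap_map_eq, Subgroup.comap_map_eq, QuotientGroup.ker_mk',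
          sup_eq_left.mpr hNH', sup_eq_left.mpr hNK] at this
      · have hcop : Nat.Coprime q d := (hq.coprime_iff_not_dvd).mpr hqd
        have hdisjH : N ⊓ H = ⊥ :=
          inf_eq_bot_of_coprime (by rw [hNcard, hHK]; exact hcop)
        have hdisjK : N ⊓ K = ⊥ :=
          inf_eq_bot_of_coprime (by rw [hNcard]; exact hcop)
        have hcards : Nat.card (H.map (QuotientGroup.mk' N)) =
            Nat.card (K.map (QuotientGroup.mk' N)) := by
          rw [card_map_mk'_of_disjoint N hdisjH, card_map_mk'_of_disjoint N hdisjK, hHK]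
        obtain ⟨gb, hgb⟩ := ihConj _ _ hcards
        obtain ⟨g, rfl⟩ := QuotientGroup.mk'_surjective N gb
        set H' := H.map (MulAut.conj g).toMonoidHom with hH'
        have hH'card : Nat.card H' = d := by
          rw [hH', card_map_conj, hHK]
        have hH'b : H'.map (QuotientGroup.mk' N) = K.map (QuotientGroup.mk' N) := by
          rw [hH', map_mk'_conj, hgb]
        set Kbig := (K.map (QuotientGroup.mk' N)).comap (QuotientGroup.mk' N) with hKbig
        have hKbigcard : Nat.card Kbig = d * q := by
          rw [hKbig, card_comap_mk', card_map_mk'_of_disjoint N hdisjK, hNcard]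
        have hH'le : H' ≤ Kbig := by
          rw [hKbig, ← hH'b]
          exact Subgroup.le_comap_map _ _
        have hKle : K ≤ Kbig := Subgroup.le_comap_map _ _
        have hNle : N ≤ Kbig := le_comap_mk' N _
        set Nk := N.subgroupOf Kbig with hNk
        haveI : Nk.Normal := hNnorm.subgroupOf Kbig
        have hNkcard : Nat.card Nk = q := by
          rw [hNk, Nat.card_congr (Subgroup.subgroupOfEquivOfLe hNle).toEquiv, hNcard]
        haveI : IsMulCommutative Nk := prime_isCommutative hq hNkcard
        set A1 := H'.subgroupOf Kbig with hA1
        set A2 := K.subgroupOf Kbig with hA2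
        have hA1card : Nat.card A1 = d := by
          rw [hA1, Nat.card_congr (Subgroup.subgroupOfEquivOfLe hH'le).toEquiv, hH'card]
        have hA2card : Nat.card A2 = d := by
          rw [hA2, Nat.card_congr (Subgroup.subgroupOfEquivOfLe hKle).toEquiv, hd]
        have hc1 : Nk.IsComplement' A1 := Subgroup.isComplement'_of_coprime
          (by rw [hNkcard, hA1card, hKbigcard, mul_comm]) (by rw [hNkcard, hA1card]; exact hcop)
        have hc2 : Nk.IsComplement' A2 := Subgroup.isComplement'_of_coprime
          (by rw [hNkcard, hA2card, hKbigcard, mul_comm]) (by rw [hNkcard, hA2card]; exact hcop)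
        obtain ⟨k, hk⟩ := conj_of_isComplement' hc1 hc2
          (by rw [hNkcard, hA1card]; exact hcop)
        refine ⟨(k : G) * g, ?_⟩
        rw [← map_conj_mul, ← hH']
        have h1 := congrArg (Subgroup.map Kbig.subtype) hk
        rwa [map_subtype_conj, hA1, hA2, Subgroup.subgroupOf_map_subtype,
          Subgroup.subgroupOf_map_subtype, inf_of_le_left hH'le, inf_of_le_left hKle] at h1

lemma conjact_smul_eq {G : Type*} [Group G] (g : ConjAct G) (K : Subgroup G) :
    g • K = K.map (MulAut.conj (ConjAct.ofConjAct g)).toMonoidHom := by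
  ext x
  rw [Subgroup.mem_pointwise_smul_iff_inv_smul_mem, Subgroup.mem_map]
  constructor
  · intro h
    refine ⟨_, h, ?_⟩
    simp only [MulEquiv.coe_toMonoidHom, MulAut.conj_apply, ConjAct.smul_def, map_inv]
    group
  · rintro ⟨y, hy, rfl⟩
    simp only [MulEquiv.coe_toMonoidHom, MulAut.conj_apply, ConjAct.smul_def, map_inv]
    group
    exact hy

end AuxHallSquarefree

/-- A finite solvable group of square-free order with exactly `n` distinct prime divisors
has exactly `2 ^ n` conjugacy classes of subgroups, one for each divisor of `|G|`. -/
theorem card_conjClasses_subgroups_of_squarefree (G : Type*) [Group G] [Fintype G]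
    (hsolv : IsSolvable G) (n : ℕ) (hn : (Fintype.card G).primeFactors.card = n)
    (hsq : Squarefree (Fintype.card G)) :
    Nat.card (Quotient (MulAction.orbitRel (ConjAct G) (Subgroup G))) = 2 ^ n ∧
    Nat.card (Quotient (MulAction.orbitRel (ConjAct G) (Subgroup G))) =
      (Fintype.card G).divisors.card := by
  classical
  set m := Fintype.card G with hmdef
  have hm0 : m ≠ 0 := Fintype.card_ne_zero
  have hmv : Nat.card G = m := Nat.card_eq_fintype_card
  obtain ⟨hex, hconj⟩ := hall_sf m G hsolv (hmv ▸ hsq) hmv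
  -- Nat.card of a subgroup is invariant on orbits
  have hwell : ∀ (a b : Subgroup G), (MulAction.orbitRel (ConjAct G) (Subgroup G)).r a b →
      Nat.card a = Nat.card b := by
    intro a b hab
    have : a ∈ MulAction.orbit (ConjAct G) b := hab
    obtain ⟨g, rfl⟩ := MulAction.mem_orbit_iff.mp this
    rw [conjact_smul_eq, card_map_conj]
  have hdvd : ∀ H : Subgroup G, Nat.card H ∈ m.divisors := by
    intro H
    exact Nat.mem_divisors.mpr ⟨hmv ▸ Subgroup.card_subgroup_dvd_card H, hm0⟩
  set F : Quotient (MulAction.orbitRel (ConjAct G) (Subgroup G)) → {x // x ∈ m.divisors} :=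
    Quotient.lift (fun H : Subgroup G => (⟨Nat.card H, hdvd H⟩ : {x // x ∈ m.divisors}))
      (fun a b hab => Subtype.ext (hwell a b hab)) with hF
  have hbij : Function.Bijective F := by
    constructor
    · intro c₁ c₂
      refine Quotient.inductionOn₂ c₁ c₂ ?_
      intro H K h
      have hcards : Nat.card H = Nat.card K := congrArg Subtype.val h
      obtain ⟨g, hg⟩ := hconj H K hcards
      refine (Quotient.sound ?_).symm
      show K ∈ MulAction.orbit (ConjAct G) H
      refine MulAction.mem_orbit_iff.mpr ⟨ConjAct.toConjAct g, ?_⟩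
      rw [conjact_smul_eq, ConjAct.ofConjAct_toConjAct, hg]
    · rintro ⟨d, hd⟩
      obtain ⟨H, hH⟩ := hex d (Nat.mem_divisors.mp hd).1
      exact ⟨⟦H⟧, Subtype.ext hH⟩
  have hcount : Nat.card (Quotient (MulAction.orbitRel (ConjAct G) (Subgroup G))) =
      m.divisors.card := by
    rw [Nat.card_eq_of_bijective F hbij, Nat.card_eq_finsetCard]
  refine ⟨?_, hcount⟩
  rw [hcount, Nat.card_divisors hm0, ← hn]
  rw [Finset.prod_congr rfl (fun p hp => ?_), Finset.prod_const]
  have h1 : m.factorization p ≤ 1 := hsq.natFactorization_le_one p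
  have h2 : m.factorization p ≠ 0 := by
    rw [← Finsupp.mem_support_iff, Nat.support_factorization]
    exact hp
  omega
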